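/- The secant variety of a rational normal curve of degree n in P^n is a 3-dimensional variety of degree binom(n−1, 2) (for n ≥ 3), and it is not contained in any quadric hypersurface. -/

import Mathlib

open MvPolynomial

namespace Stmt14Aux

open Finsupp

variable (n : ℕ)

/-- exponent multiset of `s * a^(n-k) * b^k` in variables `a b c d s t = 0 1 2 3 4 5`. -/
noncomputable def A (k : Fin (n+1)) : Fin 6 →₀ ℕ :=
  Finsupp.single (4 : Fin 6) 1 + Finsupp.single (0 : Fin 6) (n - (k : ℕ))
    + Finsupp.single (1 : Fin 6) (k : ℕ)

/-- exponent multiset of `t * c^(n-k) * d^k`. -/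
noncomputable def C' (k : Fin (n+1)) : Fin 6 →₀ ℕ :=
  Finsupp.single (5 : Fin 6) 1 + Finsupp.single (2 : Fin 6) (n - (k : ℕ))
    + Finsupp.single (3 : Fin 6) (k : ℕ)

/-- substitution polynomial for variable `k`. -/
noncomputable def g (k : Fin (n+1)) : MvPolynomial (Fin 6) ℂ :=
  monomial (A n k) 1 + monomial (C' n k) 1

lemma prod3 (u v w : Fin 6) (p q r : ℕ) (x : Fin 6 → ℂ) :
    (Finsupp.single u p + Finsupp.single v q + Finsupp.single w r).prod
      (fun i e => x i ^ e) = x u ^ p * x v ^ q * x w ^ r := by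
  rw [Finsupp.prod_add_index' (fun _ => pow_zero _) (fun _ _ _ => pow_add _ _ _),
    Finsupp.prod_add_index' (fun _ => pow_zero _) (fun _ _ _ => pow_add _ _ _),
]
  simp [Finsupp.prod_single_index]

lemma eval_g (k : Fin (n+1)) (x : Fin 6 → ℂ) :
    eval x (g n k) = x 4 * x 0 ^ (n - (k : ℕ)) * x 1 ^ (k : ℕ)
      + x 5 * x 2 ^ (n - (k : ℕ)) * x 3 ^ (k : ℕ) := by
  rw [g, map_add, eval_monomial, eval_monomial, A, C', prod3, prod3, pow_one, pow_one,
    one_mul, one_mul]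

lemma AA_ne (k l i j : Fin (n+1)) : A n k + A n l ≠ A n i + C' n j := by
  intro h
  have h5 := DFunLike.congr_fun h 5
  simp [A, C', Finsupp.single_apply] at h5

lemma CC_ne (k l i j : Fin (n+1)) : C' n k + C' n l ≠ A n i + C' n j := by
  intro h
  have h4 := DFunLike.congr_fun h 4
  simp [A, C', Finsupp.single_apply] at h4

lemma AC_eq_iff (k l i j : Fin (n+1)) :
    A n k + C' n l = A n i + C' n j ↔ k = i ∧ l = j := by
  constructor
  · intro h
    have h1 := DFunLike.congr_fun h 1
    have h3 := DFunLike.congr_fun h 3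
    simp [A, C', Finsupp.single_apply] at h1 h3
    exact ⟨Fin.val_injective h1, Fin.val_injective h3⟩
  · rintro ⟨rfl, rfl⟩; rfl

lemma coeff_gg (k l i j : Fin (n+1)) :
    coeff (A n i + C' n j) (g n k * g n l)
      = (if k = i ∧ l = j then 1 else 0) + (if l = i ∧ k = j then 1 else 0) := by
  simp only [g, add_mul, mul_add, monomial_mul, one_mul, coeff_add, coeff_monomial]
  rw [if_neg (AA_ne n k l i j), if_neg (CC_ne n k l i j), add_comm (C' n k) (A n l)]
  simp only [AC_eq_iff]
  ring

lemma exists_pair (m : Fin (n+1) →₀ ℕ) (hm : m.degree = 2) :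
    ∃ i j, m = Finsupp.single i 1 + Finsupp.single j 1 := by
  have hcard : Multiset.card m.toMultiset = 2 := by
    rw [Finsupp.card_toMultiset]
    simpa [Finsupp.degree_apply, Finsupp.sum] using hm
  obtain ⟨i, j, hij⟩ := Multiset.card_eq_two.mp hcard
  refine ⟨i, j, ?_⟩
  have h := congrArg Multiset.toFinsupp hij
  rw [Finsupp.toMultiset_toFinsupp] at h
  rw [h, show ({i, j} : Multiset (Fin (n+1))) = {i} + {j} from rfl,
    Multiset.toFinsupp_add, Multiset.toFinsupp_singleton, Multiset.toFinsupp_singleton]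

lemma prod_pair (f : Fin (n+1) → MvPolynomial (Fin 6) ℂ) (k l : Fin (n+1)) :
    (Finsupp.single k 1 + Finsupp.single l 1).prod (fun i e => f i ^ e) = f k * f l := by
  rw [Finsupp.prod_add_index' (fun _ => pow_zero _) (fun _ _ _ => pow_add _ _ _),
]
  simp [Finsupp.prod_single_index]

lemma coeff_aeval_pair (k l i j : Fin (n+1)) (c : ℂ) :
    coeff (A n i + C' n j) (aeval (g n) (monomial (Finsupp.single k 1 + Finsupp.single l 1) c))
      = c * ((if k = i ∧ l = j then 1 else 0) + (if l = i ∧ k = j then 1 else 0)) := by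
  rw [aeval_monomial, algebraMap_eq, coeff_C_mul, prod_pair, coeff_gg]

end Stmt14Aux

open Stmt14Aux Finsupp

/-- No nonzero quadric contains the secant variety of the rational normal curve of
degree n in ℙⁿ (n ≥ 3): a homogeneous quadratic polynomial vanishing at every point
s·ν(a,b) + t·ν(c,d) of a secant line of the curve ν(a,b) = (aⁿ, aⁿ⁻¹b, …, bⁿ)
must be zero. -/
theorem stmt14 (n : ℕ) (hn : 3 ≤ n) (q : MvPolynomial (Fin (n+1)) ℂ)
    (hq : q.IsHomogeneous 2)
    (hvan : ∀ a b c d s t : ℂ,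
      MvPolynomial.eval (fun i : Fin (n+1) =>
        s * a ^ (n - (i : ℕ)) * b ^ (i : ℕ) + t * c ^ (n - (i : ℕ)) * d ^ (i : ℕ)) q = 0) :
    q = 0 := by
  have hF : aeval (g n) q = 0 := by
    apply MvPolynomial.funext
    intro x
    rw [map_zero, aeval_def, algebraMap_eq, ← eval_assoc]
    have hfun : (eval x ∘ g n) = fun i : Fin (n+1) =>
        x 4 * x 0 ^ (n - (i : ℕ)) * x 1 ^ (i : ℕ)
          + x 5 * x 2 ^ (n - (i : ℕ)) * x 3 ^ (i : ℕ) :=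
      funext fun i => by rw [Function.comp_apply, eval_g]
    rw [hfun]
    exact hvan (x 0) (x 1) (x 2) (x 3) (x 4) (x 5)
  ext m
  rw [coeff_zero]
  by_cases hdeg : m.degree = 2
  swap
  · exact hq.coeff_eq_zero hdeg
  obtain ⟨i, j, rfl⟩ := exists_pair n m hdeg
  by_cases hmem : (Finsupp.single i 1 + Finsupp.single j 1) ∈ q.support
  swap
  · simpa using MvPolynomial.notMem_support_iff.mp hmem
  have h0 : coeff (A n i + C' n j) (aeval (g n) q) = 0 := by rw [hF, coeff_zero]
  conv at h0 => lhs; rw [q.as_sum]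
  rw [map_sum, coeff_sum] at h0
  rw [Finset.sum_eq_single_of_mem _ hmem ?side] at h0
  case side =>
    intro b hb hbne
    have hbdeg : b.degree = 2 := by
      rw [degree_eq_weight_one]
      exact hq (MvPolynomial.mem_support_iff.mp hb)
    obtain ⟨k, l, rfl⟩ := exists_pair n b hbdeg
    rw [coeff_aeval_pair]
    have e1 : ¬(k = i ∧ l = j) := by rintro ⟨rfl, rfl⟩; exact hbne rfl
    have e2 : ¬(l = i ∧ k = j) := by rintro ⟨rfl, rfl⟩; exact hbne (add_comm _ _)
    rw [if_neg e1, if_neg e2, add_zero, mul_zero]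
  rw [coeff_aeval_pair, if_pos ⟨rfl, rfl⟩] at h0
  have hne : ((1 : ℂ) + if j = i ∧ i = j then 1 else 0) ≠ 0 := by
    split <;> norm_num
  exact (mul_eq_zero.mp h0).resolve_right hne
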